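/- arXiv:1308.1493 — 2 statements merged into one kernel-verified Lean document; each statement's English description precedes it below -/
import Mathlib

section
/- Let ψ: ℝ → ℂ be given by ψ(x) = (1/2π) ∫_ℝ e^{ixu} ψ̂(u) du and suppose ∫_ℝ ln^α(1+|u|) |ψ̂(u)| du < ∞ for some α > 0. Set ψ_{jk}(x) = 2^{j/2} ψ(2^j x − k). Then for all x, y ∈ ℝ, j ∈ ℕ₀, and k ∈ ℤ: |ψ_{jk}(x) − ψ_{jk}(y)| ≤ 2^{j/2} · max(1, j^α) · R_α · (ln(e^α + 1/|x−y|))^{−α}, where R_α = (1/π) ∫_ℝ ln^α(e^α + |u| + 2) |ψ̂(u)| du. -/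
open MeasureTheory

/-- `ψ_{jk}(x) = 2^{j/2} ψ(2^j x - k)`. -/
noncomputable def scaledW (ψ : ℝ → ℂ) (j : ℕ) (k : ℤ) (x : ℝ) : ℂ :=
  (((2 : ℝ) ^ ((j : ℝ) / 2) : ℝ) : ℂ) * ψ ((2 : ℝ) ^ j * x - (k : ℝ))

private lemma normExpI (t : ℝ) : ‖Complex.exp (Complex.I * t)‖ = 1 := by
  simp [Complex.norm_exp]

private lemma normExpISubLe (a b : ℝ) :
    ‖Complex.exp (Complex.I * a) - Complex.exp (Complex.I * b)‖ ≤ min 2 |a - b| := by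
  refine le_min ?_ ?_
  · calc ‖Complex.exp (Complex.I * a) - Complex.exp (Complex.I * b)‖
        ≤ ‖Complex.exp (Complex.I * (a:ℂ))‖ + ‖Complex.exp (Complex.I * (b:ℂ))‖ :=
          norm_sub_le _ _
      _ = 2 := by rw [normExpI, normExpI]; norm_num
  · have key : ∀ t : ℝ, ‖Complex.exp (Complex.I * t) - 1‖ ≤ |t| := by
      intro t
      have h1 : Complex.exp (Complex.I * t) - 1
          = ((Real.cos t - 1 : ℝ) : ℂ) + ((Real.sin t : ℝ) : ℂ) * Complex.I := by
        rw [mul_comm, Complex.exp_mul_I]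
        push_cast
        ring
      rw [h1, Complex.norm_def, Complex.normSq_add_mul_I]
      have hsin : Real.sin (t/2) ^ 2 ≤ (t/2)^2 := by
        have h4 := Real.abs_sin_le_abs (x := t/2)
        calc Real.sin (t/2)^2 = |Real.sin (t/2)|^2 := (sq_abs _).symm
          _ ≤ |t/2|^2 := by nlinarith [abs_nonneg (Real.sin (t/2)), abs_nonneg (t/2)]
          _ = (t/2)^2 := sq_abs _
      have hcos : Real.cos t = 1 - 2 * Real.sin (t/2)^2 := by
        have h1' : Real.cos (2 * (t/2)) = 2 * Real.cos (t/2)^2 - 1 := Real.cos_two_mul (t/2)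
        have h2 := Real.sin_sq_add_cos_sq (t/2)
        have h3 : (2:ℝ) * (t/2) = t := by ring
        rw [h3] at h1'
        nlinarith
      have h5 : (Real.cos t - 1)^2 + Real.sin t ^ 2 ≤ t^2 := by
        have h2 := Real.sin_sq_add_cos_sq t
        nlinarith
      calc Real.sqrt ((Real.cos t - 1)^2 + Real.sin t^2) ≤ Real.sqrt (t^2) :=
            Real.sqrt_le_sqrt h5
        _ = |t| := Real.sqrt_sq_eq_abs t
    have h2 : Complex.exp (Complex.I * a) - Complex.exp (Complex.I * b)
        = Complex.exp (Complex.I * b) * (Complex.exp (Complex.I * ((a - b : ℝ):ℂ)) - 1) := by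
      rw [mul_sub, ← Complex.exp_add]
      push_cast
      ring_nf
    rw [h2, norm_mul, normExpI, one_mul]
    exact key (a - b)

private lemma logCle (α : ℝ) (j : ℕ) (u : ℝ) :
    Real.log (Real.exp α + |u| * 2^j / 2) ≤ max 1 (j:ℝ) * Real.log (Real.exp α + |u| + 2) := by
  have hE : (0:ℝ) < Real.exp α := Real.exp_pos α
  have hu : (0:ℝ) ≤ |u| := abs_nonneg u
  have hM2 : Real.log 2 ≤ Real.log (Real.exp α + |u| + 2) :=
    Real.log_le_log (by norm_num) (by linarith)
  have hM0 : (0:ℝ) ≤ Real.log (Real.exp α + |u| + 2) :=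
    le_trans (Real.log_nonneg (by norm_num)) hM2
  cases j with
  | zero =>
    simp only [pow_zero, Nat.cast_zero]
    rw [max_eq_left (by norm_num), one_mul]
    exact Real.log_le_log (by positivity) (by linarith)
  | succ n =>
    have h2n : (1:ℝ) ≤ 2^n := one_le_pow₀ (by norm_num)
    have harg : Real.exp α + |u| * 2^(n+1) / 2 ≤ 2^n * (Real.exp α + |u| + 2) := by
      have h : |u| * 2^(n+1) / 2 = |u| * 2^n := by ring
      rw [h]
      nlinarith [mul_nonneg hu (le_trans zero_le_one h2n)]
    have hpos : (0:ℝ) < Real.exp α + |u| * 2^(n+1) / 2 := by positivity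
    calc Real.log (Real.exp α + |u| * 2^(n+1) / 2)
        ≤ Real.log (2^n * (Real.exp α + |u| + 2)) := Real.log_le_log hpos harg
      _ = n * Real.log 2 + Real.log (Real.exp α + |u| + 2) := by
          rw [Real.log_mul (by positivity) (by positivity), Real.log_pow]
      _ ≤ n * Real.log (Real.exp α + |u| + 2) + Real.log (Real.exp α + |u| + 2) := by
          have := mul_le_mul_of_nonneg_left hM2 (by positivity : (0:ℝ) ≤ (n:ℝ))
          linarith
      _ = ((n:ℝ)+1) * Real.log (Real.exp α + |u| + 2) := by ring
      _ = max 1 (((n+1 : ℕ)):ℝ) * Real.log (Real.exp α + |u| + 2) := by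
          rw [max_eq_right (by push_cast; linarith [Nat.cast_nonneg (α := ℝ) n])]
          push_cast; ring

private lemma keyIneq (α : ℝ) (hα : 0 < α) (j : ℕ) (u h : ℝ) (hh : 0 ≤ h) :
    min 2 (|u| * 2^j * h) * (Real.log (Real.exp α + 1/h))^α ≤
      2 * (max 1 (j:ℝ))^α * (Real.log (Real.exp α + |u| + 2))^α := by
  have hE1 : (1:ℝ) < Real.exp α := by
    rw [show (1:ℝ) = Real.exp 0 by simp]
    exact Real.exp_lt_exp.mpr hα
  have hu : (0:ℝ) ≤ |u| := abs_nonneg u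
  have hinv : (0:ℝ) ≤ 1/h := by positivity
  set M := Real.log (Real.exp α + |u| + 2) with hMdef
  set m := max 1 (j:ℝ) with hmdef
  set L := Real.log (Real.exp α + 1/h) with hLdef
  have hL0 : 0 ≤ L := Real.log_nonneg (by linarith)
  have hM0 : 0 ≤ M := Real.log_nonneg (by linarith)
  have hm1 : (1:ℝ) ≤ m := le_max_left _ _
  have hm0 : (0:ℝ) ≤ m := by linarith
  have hmM : (0:ℝ) ≤ m * M := mul_nonneg hm0 hM0
  have hCle : Real.log (Real.exp α + |u| * 2^j / 2) ≤ m * M := logCle α j u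
  have hαC : α ≤ Real.log (Real.exp α + |u| * 2^j / 2) := by
    rw [show α = Real.log (Real.exp α) by rw [Real.log_exp]]
    apply Real.log_le_log (Real.exp_pos α)
    rw [Real.log_exp]
    have h9 : (0:ℝ) ≤ |u| * 2^j / 2 := by positivity
    linarith
  have hrhs : 2 * m^α * M^α = 2 * (m*M)^α := by
    rw [Real.mul_rpow hm0 hM0, mul_assoc]
  rw [hrhs]
  rcases le_or_gt 2 (|u| * 2^j * h) with hcase | hcase
  · rw [min_eq_left hcase]
    have hh0 : 0 < h := by
      rcases hh.lt_or_eq with h' | h'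
      · exact h'
      · exfalso; rw [← h'] at hcase; simp at hcase; linarith
    have h1h : 1/h ≤ |u| * 2^j / 2 := by
      rw [div_le_div_iff₀ hh0 (by norm_num)]
      nlinarith
    have hLmM : L ≤ m * M := by
      calc L ≤ Real.log (Real.exp α + |u| * 2^j / 2) :=
            Real.log_le_log (by positivity) (by linarith)
        _ ≤ m * M := hCle
    have h10 := Real.rpow_le_rpow hL0 hLmM hα.le
    linarith
  · rw [min_eq_right hcase.le]
    set t := |u| * 2^j * h / 2 with htdef
    have ht0 : 0 ≤ t := by positivity
    have ht1 : t < 1 := by rw [htdef]; linarith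
    have hD : |u| * 2^j * h = 2 * t := by rw [htdef]; ring
    rw [hD]
    rcases ht0.lt_or_eq with htpos | htz
    · set s := t ^ (α⁻¹) with hsdef
      have hs0 : 0 < s := Real.rpow_pos_of_pos htpos _
      have hs1 : s ≤ 1 := Real.rpow_le_one htpos.le ht1.le (by positivity)
      have hsα : s ^ α = t := by
        rw [hsdef, ← Real.rpow_mul htpos.le, inv_mul_cancel₀ hα.ne', Real.rpow_one]
      have hh0 : 0 < h := by
        rcases hh.lt_or_eq with h' | h'
        · exact h'
        · exfalso
          have h11 := htpos
          rw [htdef, ← h'] at h11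
          simp at h11
      set A := |u| * 2^j / 2 with hAdef
      have hA0 : 0 < A := by
        have h13 : 0 < t := htpos
        rw [htdef] at h13
        rw [hAdef]
        nlinarith
      have htA : t = A * h := by rw [htdef, hAdef]; ring
      have hinvh : 1/h = A / t := by
        rw [htA]
        field_simp
      have hlogs : Real.log t = α * Real.log s := by
        rw [← hsα, Real.log_rpow hs0]
      have hLle : L ≤ Real.log (Real.exp α + A) + α * (- Real.log s) := by
        have harg : Real.exp α + A / t ≤ (Real.exp α + A) / t := by
          rw [add_div]
          have h12 : Real.exp α ≤ Real.exp α / t := by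
            rw [le_div_iff₀ htpos]
            nlinarith [Real.exp_pos α]
          linarith
        calc L = Real.log (Real.exp α + A / t) := by rw [hLdef, hinvh]
          _ ≤ Real.log ((Real.exp α + A) / t) :=
              Real.log_le_log (by positivity) harg
          _ = Real.log (Real.exp α + A) - Real.log t :=
              Real.log_div (by positivity) htpos.ne'
          _ = Real.log (Real.exp α + A) + α * (- Real.log s) := by
              rw [hlogs]; ring
      have hslog : s * (- Real.log s) ≤ 1 - s := by
        have h1 : Real.log s⁻¹ ≤ s⁻¹ - 1 := Real.log_le_sub_one_of_pos (by positivity)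
        rw [Real.log_inv] at h1
        have h2 := mul_le_mul_of_nonneg_left h1 hs0.le
        have h3 : s * (s⁻¹ - 1) = 1 - s := by field_simp
        linarith [h3 ▸ h2]
      have hmain : s * L ≤ m * M := by
        set C := Real.log (Real.exp α + A) with hCdef
        have hαC' : α ≤ C := by rw [hCdef, hAdef]; exact hαC
        have hCmM : C ≤ m * M := by rw [hCdef, hAdef]; exact hCle
        have e1 : s * L ≤ s * C + α * (s * (- Real.log s)) := by
          have h6 := mul_le_mul_of_nonneg_left hLle hs0.le
          calc s * L ≤ s * (C + α * (- Real.log s)) := h6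
            _ = s * C + α * (s * (- Real.log s)) := by ring
        have e2 : α * (s * (- Real.log s)) ≤ α * (1 - s) :=
          mul_le_mul_of_nonneg_left hslog hα.le
        have e3 : α * (1 - s) ≤ C * (1 - s) :=
          mul_le_mul_of_nonneg_right hαC' (by linarith)
        have e4 : s * C + C * (1 - s) = C := by ring
        linarith
      have hfin : (s * L)^α ≤ (m * M)^α :=
        Real.rpow_le_rpow (by positivity) hmain hα.le
      rw [Real.mul_rpow hs0.le hL0, hsα] at hfin
      calc 2 * t * L^α = 2 * (t * L^α) := by ring
        _ ≤ 2 * (m*M)^α := by linarith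
    · rw [← htz]
      simp only [mul_zero, zero_mul]
      positivity

private lemma keyIneq' (α : ℝ) (hα : 0 < α) (j : ℕ) (u h : ℝ) (hh : 0 ≤ h) :
    min 2 (|u| * 2^j * h) ≤
      2 * (max 1 (j:ℝ))^α * (Real.log (Real.exp α + |u| + 2))^α *
        (Real.log (Real.exp α + 1/h))^(-α) := by
  have hE1 : (1:ℝ) < Real.exp α := by
    rw [show (1:ℝ) = Real.exp 0 by simp]
    exact Real.exp_lt_exp.mpr hα
  have hinv : (0:ℝ) ≤ 1/h := by positivity
  have hL : 0 < Real.log (Real.exp α + 1/h) := Real.log_pos (by linarith)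
  have hLα : 0 < (Real.log (Real.exp α + 1/h))^α := Real.rpow_pos_of_pos hL α
  have h1 := keyIneq α hα j u h hh
  rw [Real.rpow_neg hL.le]
  rw [← le_div_iff₀ hLα] at h1
  calc min 2 (|u| * 2^j * h)
      ≤ 2 * (max 1 (j:ℝ))^α * (Real.log (Real.exp α + |u| + 2))^α /
          (Real.log (Real.exp α + 1/h))^α := h1
    _ = 2 * (max 1 (j:ℝ))^α * (Real.log (Real.exp α + |u| + 2))^α *
          ((Real.log (Real.exp α + 1/h))^α)⁻¹ := by rw [div_eq_mul_inv]

private lemma maxRpow (α : ℝ) (hα : 0 < α) (j : ℕ) :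
    (max 1 (j:ℝ))^α = max 1 ((j:ℝ)^α) := by
  rcases Nat.eq_zero_or_pos j with h | h
  · subst h
    simp [Real.zero_rpow hα.ne', Real.one_rpow]
  · have h1 : (1:ℝ) ≤ (j:ℝ) := by exact_mod_cast h
    have h2 : (1:ℝ) ≤ (j:ℝ)^α := Real.one_le_rpow h1 hα.le
    rw [max_eq_right h1, max_eq_right h2]

private lemma rpowAddLe (α a b : ℝ) (hα : 0 ≤ α) (ha : 0 ≤ a) (hb : 0 ≤ b) :
    (a + b)^α ≤ 2^α * (a^α + b^α) := by
  have h1 : a + b ≤ 2 * max a b := by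
    rcases le_total a b with h | h
    · rw [max_eq_right h]; linarith
    · rw [max_eq_left h]; linarith
  have h2 : (a+b)^α ≤ (2 * max a b)^α :=
    Real.rpow_le_rpow (by linarith) h1 hα
  have h3 : (2 * max a b)^α = 2^α * (max a b)^α :=
    Real.mul_rpow (by norm_num) (le_max_of_le_left ha)
  have h4 : (max a b)^α ≤ a^α + b^α := by
    rcases le_total a b with h | h
    · rw [max_eq_right h]
      have := Real.rpow_nonneg ha α
      linarith
    · rw [max_eq_left h]
      have := Real.rpow_nonneg hb α
      linarith
  calc (a+b)^α ≤ 2^α * (max a b)^α := h3 ▸ h2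
    _ ≤ 2^α * (a^α + b^α) := by
        have h5 : (0:ℝ) ≤ (2:ℝ)^α := Real.rpow_nonneg (by norm_num) α
        exact mul_le_mul_of_nonneg_left h4 h5

/-- Oscillation lemma: if `ψ` is the inverse Fourier transform of `g = ψ̂` and
`∫ ln^α(1+|u|)|g(u)| du < ∞`, then
`|ψ_{jk}(x) - ψ_{jk}(y)| ≤ 2^{j/2} max(1, j^α) R_α ln^{-α}(e^α + 1/|x-y|)` with
`R_α = (1/π) ∫ ln^α(e^α + |u| + 2)|g(u)| du`. -/
theorem scaled_wavelet_increment_bound (ψ g : ℝ → ℂ)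
    (hrep : ∀ x : ℝ, ψ x =
      ((1 / (2 * Real.pi) : ℝ) : ℂ) * ∫ u : ℝ, Complex.exp (Complex.I * u * x) * g u)
    (α : ℝ) (hα : 0 < α)
    (hint : Integrable (fun u : ℝ => (Real.log (1 + |u|)) ^ α * ‖g u‖)) :
    ∀ (x y : ℝ) (j : ℕ) (k : ℤ),
      ‖scaledW ψ j k x - scaledW ψ j k y‖ ≤
        (2 : ℝ) ^ ((j : ℝ) / 2) * max 1 ((j : ℝ) ^ α) *
          ((1 / Real.pi) * ∫ u : ℝ, (Real.log (Real.exp α + |u| + 2)) ^ α * ‖g u‖) *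
          (Real.log (Real.exp α + 1 / |x - y|)) ^ (-α) := by
  intro x y j k
  have hπ : (0:ℝ) < Real.pi := Real.pi_pos
  have hE1 : (1:ℝ) < Real.exp α := by
    rw [show (1:ℝ) = Real.exp 0 by simp]
    exact Real.exp_lt_exp.mpr hα
  have hc2 : (0:ℝ) ≤ (2:ℝ) ^ ((j : ℝ) / 2) := Real.rpow_nonneg (by norm_num) _
  have hMnn : ∀ u : ℝ, (0:ℝ) ≤ (Real.log (Real.exp α + |u| + 2)) ^ α := fun u =>
    Real.rpow_nonneg (Real.log_nonneg (by have := abs_nonneg u; linarith)) α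
  have hInn : (0:ℝ) ≤ ∫ u : ℝ, (Real.log (Real.exp α + |u| + 2)) ^ α * ‖g u‖ :=
    integral_nonneg fun u => mul_nonneg (hMnn u) (norm_nonneg _)
  have hLnn : (0:ℝ) ≤ (Real.log (Real.exp α + 1 / |x - y|)) ^ (-α) := by
    apply Real.rpow_nonneg
    apply Real.log_nonneg
    have : (0:ℝ) ≤ 1 / |x - y| := by positivity
    linarith
  have hRHS : (0:ℝ) ≤ (2 : ℝ) ^ ((j : ℝ) / 2) * max 1 ((j : ℝ) ^ α) *
      ((1 / Real.pi) * ∫ u : ℝ, (Real.log (Real.exp α + |u| + 2)) ^ α * ‖g u‖) *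
      (Real.log (Real.exp α + 1 / |x - y|)) ^ (-α) := by
    apply mul_nonneg
    apply mul_nonneg
    · exact mul_nonneg hc2 (le_trans zero_le_one (le_max_left _ _))
    · exact mul_nonneg (by positivity) hInn
    · exact hLnn
  have hnormexp : ∀ (u z : ℝ), ‖Complex.exp (Complex.I * u * z)‖ = 1 := by
    intro u z
    rw [show Complex.I * (u:ℂ) * (z:ℂ) = Complex.I * ((u*z : ℝ) : ℂ) by push_cast; ring]
    exact normExpI (u*z)
  by_cases hg : Integrable g
  · -- main case
    have hFi : ∀ z : ℝ, Integrable (fun u : ℝ => Complex.exp (Complex.I * u * z) * g u) := by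
      intro z
      apply hg.bdd_mul
      · apply Continuous.aestronglyMeasurable
        fun_prop
      · exact Filter.Eventually.of_forall (fun u => le_of_eq (hnormexp u z))
    -- integrability of the weighted norm
    have hMg : Integrable (fun u : ℝ => (Real.log (Real.exp α + |u| + 2)) ^ α * ‖g u‖) := by
      apply Integrable.mono'
        ((hg.norm.const_mul (2^α * (Real.log (Real.exp α + 2))^α)).add (hint.const_mul (2^α)))
      · apply AEStronglyMeasurable.mul _ hg.norm.aestronglyMeasurable
        apply Continuous.aestronglyMeasurable
        apply Continuous.rpow_const
        · apply Continuous.log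
          · fun_prop
          · intro u
            have hE := Real.exp_pos α
            have := abs_nonneg u
            positivity
        · intro u
          right
          exact hα.le
      · filter_upwards with u
        rw [Real.norm_of_nonneg (mul_nonneg (hMnn u) (norm_nonneg _))]
        have hlog : Real.log (Real.exp α + |u| + 2)
            ≤ Real.log (Real.exp α + 2) + Real.log (1 + |u|) := by
          rw [← Real.log_mul (by positivity) (by positivity)]
          apply Real.log_le_log (by positivity)
          have h1 : (Real.exp α + 2) * (1 + |u|) = Real.exp α + 2 + (Real.exp α + 2) * |u| := by
            ring
          have h2 : |u| ≤ (Real.exp α + 2) * |u| := by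
            nlinarith [abs_nonneg u, Real.exp_pos α]
          linarith
        have hrp : (Real.log (Real.exp α + |u| + 2))^α
            ≤ 2^α * ((Real.log (Real.exp α + 2))^α + (Real.log (1 + |u|))^α) := by
          have h0 : (0:ℝ) ≤ Real.log (Real.exp α + 2) :=
            Real.log_nonneg (by linarith)
          have h0' : (0:ℝ) ≤ Real.log (1 + |u|) :=
            Real.log_nonneg (by have := abs_nonneg u; linarith)
          calc (Real.log (Real.exp α + |u| + 2))^α
              ≤ (Real.log (Real.exp α + 2) + Real.log (1 + |u|))^α := by
                apply Real.rpow_le_rpow _ hlog hα.le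
                exact Real.log_nonneg (by have := abs_nonneg u; linarith)
            _ ≤ 2^α * ((Real.log (Real.exp α + 2))^α + (Real.log (1 + |u|))^α) :=
                rpowAddLe α _ _ hα.le h0 h0'
        have := mul_le_mul_of_nonneg_right hrp (norm_nonneg (g u))
        calc (Real.log (Real.exp α + |u| + 2))^α * ‖g u‖
            ≤ (2^α * ((Real.log (Real.exp α + 2))^α + (Real.log (1 + |u|))^α)) * ‖g u‖ := this
          _ = 2^α * (Real.log (Real.exp α + 2))^α * ‖g u‖
              + 2^α * ((Real.log (1 + |u|))^α * ‖g u‖) := by ring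
    -- the difference as one integral
    set a : ℝ := (2:ℝ)^j * x - (k:ℝ) with hadef
    set b : ℝ := (2:ℝ)^j * y - (k:ℝ) with hbdef
    have hsub : scaledW ψ j k x - scaledW ψ j k y
        = (((2:ℝ)^((j:ℝ)/2) : ℝ):ℂ) * (((1/(2*Real.pi) : ℝ):ℂ) *
            ∫ u : ℝ, (Complex.exp (Complex.I * u * a) - Complex.exp (Complex.I * u * b)) * g u) := by
      have hint2 : (∫ u : ℝ, (Complex.exp (Complex.I * u * a) - Complex.exp (Complex.I * u * b)) * g u)
          = (∫ u : ℝ, Complex.exp (Complex.I * u * a) * g u)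
            - ∫ u : ℝ, Complex.exp (Complex.I * u * b) * g u := by
        rw [← integral_sub (hFi a) (hFi b)]
        congr 1
        funext u
        ring
      rw [hint2]
      simp only [scaledW, hrep, ← hadef, ← hbdef]
      ring
    rw [hsub, norm_mul, norm_mul, Complex.norm_real, Complex.norm_real,
      Real.norm_of_nonneg hc2, Real.norm_of_nonneg (by positivity : (0:ℝ) ≤ 1/(2*Real.pi))]
    set m := max 1 ((j:ℝ)) with hmdef
    set L := Real.log (Real.exp α + 1 / |x - y|) with hLdef
    have hbound : ‖∫ u : ℝ, (Complex.exp (Complex.I * u * a) - Complex.exp (Complex.I * u * b)) * g u‖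
        ≤ ∫ u : ℝ, (2 * m^α * L^(-α)) * ((Real.log (Real.exp α + |u| + 2))^α * ‖g u‖) := by
      apply norm_integral_le_of_norm_le (hMg.const_mul _)
      filter_upwards with u
      rw [norm_mul]
      have h1 : ‖Complex.exp (Complex.I * u * a) - Complex.exp (Complex.I * u * b)‖
          ≤ min 2 (|u| * 2^j * |x - y|) := by
        rw [show Complex.I * (u:ℂ) * (a:ℂ) = Complex.I * ((u*a : ℝ):ℂ) by push_cast; ring,
          show Complex.I * (u:ℂ) * (b:ℂ) = Complex.I * ((u*b : ℝ):ℂ) by push_cast; ring]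
        refine le_trans (normExpISubLe (u*a) (u*b)) (le_of_eq ?_)
        have h2 : u*a - u*b = u * ((2:ℝ)^j * (x - y)) := by
          rw [hadef, hbdef]; ring
        rw [h2, abs_mul, abs_mul, abs_of_nonneg (by positivity : (0:ℝ) ≤ (2:ℝ)^j), mul_assoc]
      have h3 := keyIneq' α hα j u |x-y| (abs_nonneg _)
      calc ‖Complex.exp (Complex.I * u * a) - Complex.exp (Complex.I * u * b)‖ * ‖g u‖
          ≤ (2 * m^α * (Real.log (Real.exp α + |u| + 2))^α * L^(-α)) * ‖g u‖ := by
            apply mul_le_mul_of_nonneg_right (h1.trans _) (norm_nonneg _)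
            rw [hmdef, hLdef]
            exact h3
        _ = (2 * m^α * L^(-α)) * ((Real.log (Real.exp α + |u| + 2))^α * ‖g u‖) := by ring
    rw [integral_const_mul] at hbound
    calc (2:ℝ)^((j:ℝ)/2) * (1/(2*Real.pi) *
          ‖∫ u : ℝ, (Complex.exp (Complex.I * u * a) - Complex.exp (Complex.I * u * b)) * g u‖)
        ≤ (2:ℝ)^((j:ℝ)/2) * (1/(2*Real.pi) *
            ((2 * m^α * L^(-α)) * ∫ u : ℝ, (Real.log (Real.exp α + |u| + 2))^α * ‖g u‖)) := by
          apply mul_le_mul_of_nonneg_left _ hc2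
          apply mul_le_mul_of_nonneg_left hbound (by positivity)
      _ = (2:ℝ)^((j:ℝ)/2) * max 1 ((j:ℝ)^α) *
            ((1/Real.pi) * ∫ u : ℝ, (Real.log (Real.exp α + |u| + 2))^α * ‖g u‖) * L^(-α) := by
          rw [← maxRpow α hα j, ← hmdef]
          field_simp
  · -- g not integrable : everything vanishes
    have hnot : ∀ z : ℝ, ¬ Integrable (fun u : ℝ => Complex.exp (Complex.I * u * z) * g u) := by
      intro z hcon
      apply hg
      have hbd : Integrable (fun u : ℝ =>
          Complex.exp (-(Complex.I * u * z)) * (Complex.exp (Complex.I * u * z) * g u)) := by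
        apply hcon.bdd_mul
        · apply Continuous.aestronglyMeasurable
          fun_prop
        · refine Filter.Eventually.of_forall (fun u => le_of_eq (?_ : _ = (1:ℝ)))
          rw [show -(Complex.I * (u:ℂ) * (z:ℂ)) = Complex.I * ((-(u*z) : ℝ):ℂ) by push_cast; ring]
          exact normExpI _
      have heq : (fun u : ℝ =>
          Complex.exp (-(Complex.I * u * z)) * (Complex.exp (Complex.I * u * z) * g u)) = g := by
        funext u
        rw [← mul_assoc, ← Complex.exp_add]
        simp
      rwa [heq] at hbd
    have hψ : ∀ z : ℝ, ψ z = 0 := by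
      intro z
      rw [hrep z, integral_undef (hnot z), mul_zero]
    simp only [scaledW, hψ, mul_zero, sub_zero, norm_zero]
    exact hRHS
end

section
/- Let ψ: ℝ → ℂ satisfy: (a) |ψ(x)| ≤ Φ_ψ(|x|) where Φ_ψ: [0,∞) → ℝ is decreasing with Φ_ψ(0) < ∞ and compact support [−â, â]; (b) ψ(x) = (1/2π) ∫_ℝ e^{ixu} ψ̂(u) du with ∫_ℝ ln^α(1+|u|) |ψ̂(u)| du < ∞ for some α > 0. Then for all γ ∈ (0,1), x, y ∈ ℝ, and j ∈ ℕ₀: Σ_{k∈ℤ} |ψ_{jk}(x) − ψ_{jk}(y)| ≤ 2^{j/2 + 1} · R_α^{1−γ} · L_γ · max(1, j^{α(1−γ)}) · (ln(e^α + 1/|x−y|))^{−α(1−γ)}, where R_α = (1/π) ∫_ℝ ln^α(e^α + |u| + 2) |ψ̂(u)| du and L_γ = 3 Φ_ψ(0)^γ + 4 ∫_{1/2}^{â} Φ_ψ(t)^γ dt for â > 1/2 (and L_γ = 3 Φ_ψ(0)^γ for â < 1/2). -/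
open MeasureTheory

lemma aux_exp_norm (θ : ℝ) : ‖Complex.exp ((θ:ℂ) * Complex.I) - 1‖ ≤ |θ| := by
  have h : Complex.exp ((θ:ℂ) * Complex.I) - 1 =
      Complex.ofReal (Real.cos θ - 1) + Complex.ofReal (Real.sin θ) * Complex.I := by
    rw [Complex.exp_mul_I]; push_cast; ring
  rw [h, Complex.norm_add_mul_I]
  rw [show |θ| = Real.sqrt (θ^2) by rw [Real.sqrt_sq_eq_abs]]
  apply Real.sqrt_le_sqrt
  have := Real.one_sub_sq_div_two_le_cos (x := θ)
  nlinarith [Real.sin_sq_add_cos_sq θ]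

lemma aux_exp_diff (s u v : ℝ) :
    ‖Complex.exp (Complex.I * s * u) - Complex.exp (Complex.I * s * v)‖ ≤
      min 2 (|s| * |u - v|) := by
  have hnorm : ∀ w : ℝ, ‖Complex.exp (Complex.I * s * w)‖ = 1 := by
    intro w
    rw [Complex.norm_exp]
    have : (Complex.I * s * w).re = 0 := by simp
    rw [this, Real.exp_zero]
  refine le_min ?_ ?_
  · calc ‖Complex.exp (Complex.I * s * u) - Complex.exp (Complex.I * s * v)‖
        ≤ ‖Complex.exp (Complex.I * s * u)‖ + ‖Complex.exp (Complex.I * s * v)‖ :=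
          norm_sub_le _ _
    _ = 2 := by rw [hnorm u, hnorm v]; norm_num
  · have hfac : Complex.exp (Complex.I * s * u) - Complex.exp (Complex.I * s * v) =
        Complex.exp (Complex.I * s * v) *
          (Complex.exp (((s * (u - v) : ℝ) : ℂ) * Complex.I) - 1) := by
      rw [mul_sub, ← Complex.exp_add, mul_one]
      congr 2
      push_cast
      ring
    rw [hfac, norm_mul, hnorm v, one_mul]
    calc ‖Complex.exp (((s * (u - v) : ℝ) : ℂ) * Complex.I) - 1‖ ≤ |s * (u - v)| :=
        aux_exp_norm _
    _ = |s| * |u - v| := abs_mul _ _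

lemma aux_mono (α b L : ℝ) (hα : 0 < α) (hb : α ≤ b) (hL : b ≤ L) :
    L ^ α * (Real.exp b - Real.exp α) ≤ b ^ α * (Real.exp L - Real.exp α) := by
  have hb0 : 0 < b := lt_of_lt_of_le hα hb
  have hL0 : 0 < L := lt_of_lt_of_le hb0 hL
  have h1 : L ^ α ≤ b ^ α * Real.exp (L - b) := by
    have hdiv : 1 ≤ L / b := (one_le_div hb0).2 hL
    have hlog : Real.log (L / b) ≤ L / b - 1 := Real.log_le_sub_one_of_pos (by positivity)
    have h2 : Real.log (L / b) * α ≤ L - b := by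
      have hmm : α * Real.log (L / b) ≤ b * (L / b - 1) :=
        mul_le_mul hb hlog (Real.log_nonneg hdiv) (by linarith)
      have : b * (L / b - 1) = L - b := by field_simp
      linarith [hmm, this]
    have hLb : L = b * (L / b) := by field_simp
    calc L ^ α = (b * (L / b)) ^ α := by rw [← hLb]
    _ = b ^ α * (L / b) ^ α := Real.mul_rpow hb0.le (by positivity)
    _ ≤ b ^ α * Real.exp (L - b) := by
        apply mul_le_mul_of_nonneg_left _ (Real.rpow_nonneg hb0.le α)
        rw [Real.rpow_def_of_pos (by positivity)]
        exact Real.exp_le_exp.2 h2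
  have hexpb : Real.exp α ≤ Real.exp b := Real.exp_le_exp.2 hb
  have e1 : Real.exp (L - b) * Real.exp b = Real.exp L := by
    rw [← Real.exp_add]; ring_nf
  have e2 : Real.exp (L - b) * Real.exp α = Real.exp (L - b + α) := (Real.exp_add _ _).symm
  have e3 : Real.exp α ≤ Real.exp (L - b + α) := Real.exp_le_exp.2 (by linarith)
  calc L ^ α * (Real.exp b - Real.exp α)
      ≤ (b ^ α * Real.exp (L - b)) * (Real.exp b - Real.exp α) :=
        mul_le_mul_of_nonneg_right h1 (by linarith)
  _ = b ^ α * (Real.exp L - Real.exp (L - b + α)) := by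
      rw [mul_assoc, mul_sub, e1, e2, mul_sub]
  _ ≤ b ^ α * (Real.exp L - Real.exp α) := by
      apply mul_le_mul_of_nonneg_left _ (Real.rpow_nonneg hb0.le α)
      linarith

lemma aux_pow_lb (A s : ℝ) (hA : 1 ≤ A) (hs : 0 ≤ s) :
    ∀ n : ℕ, 1 ≤ n → A ^ n + A ^ (n - 1) * s ≤ (A + s) ^ n := by
  intro n hn
  induction n with
  | zero => omega
  | succ k ih =>
    rcases Nat.eq_or_lt_of_le hn with h1 | h1
    · have hk : k = 0 := by omega
      subst hk
      simp
    · have hk1 : 1 ≤ k := by omega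
      have ihk := ih hk1
      have hA0 : (0:ℝ) ≤ A := by linarith
      have hpow : A ^ k = A ^ (k - 1) * A := by
        rw [← pow_succ]
        congr 1
        omega
      have hk0 : (0:ℝ) ≤ A ^ k := pow_nonneg hA0 k
      have hk10 : (0:ℝ) ≤ A ^ (k - 1) := pow_nonneg hA0 _
      have step : (A + s) * (A ^ k + A ^ (k - 1) * s) ≤ (A + s) ^ (k + 1) := by
        rw [pow_succ, mul_comm ((A+s)^k) (A+s)]
        exact mul_le_mul_of_nonneg_left ihk (by linarith)
      have expand : A ^ (k + 1) + A ^ k * s ≤ (A + s) * (A ^ k + A ^ (k - 1) * s) := by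
        have : (A + s) * (A ^ k + A ^ (k - 1) * s) =
            A ^ (k+1) + A ^ k * s + s * A ^ k + s^2 * A ^ (k-1) := by
          rw [pow_succ]
          nlinarith [hpow]
        nlinarith [mul_nonneg hs hk0, mul_nonneg (mul_nonneg hs hs) hk10]
      have : (k + 1) - 1 = k := by omega
      rw [this]
      linarith

lemma aux_two_three (j : ℕ) : (2:ℝ) ^ j ≤ 2 * 3 ^ (max 1 j - 1) := by
  cases j with
  | zero => norm_num
  | succ k =>
    have h1 : max 1 (k + 1) = k + 1 := max_eq_right (by omega)
    rw [h1]
    have : (k + 1) - 1 = k := by omega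
    rw [this, pow_succ]
    have : (2:ℝ) ^ k ≤ 3 ^ k := pow_le_pow_left₀ (by norm_num) (by norm_num) k
    nlinarith [pow_nonneg (by norm_num : (0:ℝ) ≤ 2) k]

lemma aux_add_rpow (s t γ : ℝ) (hs : 0 ≤ s) (ht : 0 ≤ t) (hγ0 : 0 ≤ γ) (hγ1 : γ ≤ 1) :
    (s + t) ^ γ ≤ s ^ γ + t ^ γ := by
  calc (s + t) ^ γ = ((s.toNNReal + t.toNNReal : NNReal) : ℝ) ^ γ := by
        rw [NNReal.coe_add, Real.coe_toNNReal _ hs, Real.coe_toNNReal _ ht]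
  _ = (((s.toNNReal + t.toNNReal) ^ γ : NNReal) : ℝ) := by
        rw [NNReal.coe_rpow]
  _ ≤ ((s.toNNReal ^ γ + t.toNNReal ^ γ : NNReal) : ℝ) :=
        NNReal.coe_le_coe.2 (NNReal.rpow_add_le_add_rpow _ _ hγ0 hγ1)
  _ = s ^ γ + t ^ γ := by
        rw [NNReal.coe_add, NNReal.coe_rpow, NNReal.coe_rpow,
          Real.coe_toNNReal _ hs, Real.coe_toNNReal _ ht]

lemma aux_interp (d X Y γ : ℝ) (hd : 0 ≤ d) (hX : d ≤ X) (hY : d ≤ Y)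
    (hγ0 : 0 < γ) (hγ1 : γ < 1) : d ≤ X ^ (1 - γ) * Y ^ γ := by
  have hX0 : 0 ≤ X := le_trans hd hX
  have hY0 : 0 ≤ Y := le_trans hd hY
  rcases eq_or_lt_of_le hd with h0 | hd0
  · rw [← h0]
    exact mul_nonneg (Real.rpow_nonneg hX0 _) (Real.rpow_nonneg hY0 _)
  · calc d = d ^ ((1 - γ) + γ) := by rw [sub_add_cancel, Real.rpow_one]
    _ = d ^ (1 - γ) * d ^ γ := Real.rpow_add hd0 _ _
    _ ≤ X ^ (1 - γ) * Y ^ γ :=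
        mul_le_mul (Real.rpow_le_rpow hd hX (by linarith))
          (Real.rpow_le_rpow hd hY hγ0.le) (Real.rpow_nonneg hd γ)
          (Real.rpow_nonneg hX0 _)

lemma claimE (α : ℝ) (hα : 0 < α) (t h : ℝ) (hh : 0 ≤ h) (j : ℕ) :
    min 2 (|t| * (2 ^ j * h)) ≤
      2 * Real.log (Real.exp α + |t| + 2) ^ α * ((max 1 j : ℕ) : ℝ) ^ α *
        Real.log (Real.exp α + 1 / h) ^ (-α) := by
  set M := Real.log (Real.exp α + |t| + 2) with hM
  set m : ℝ := ((max 1 j : ℕ) : ℝ) with hmdef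
  set L := Real.log (Real.exp α + 1 / h) with hLdef
  have hm1 : (1:ℝ) ≤ m := by
    rw [hmdef]
    exact_mod_cast Nat.one_le_cast.2 (le_max_left 1 j)
  have hm0 : (0:ℝ) ≤ m := by linarith
  have hMα : α < M := by
    have h1 : Real.exp α < Real.exp α + |t| + 2 := by
      have := abs_nonneg t; linarith
    calc α = Real.log (Real.exp α) := (Real.log_exp α).symm
    _ < M := Real.log_lt_log (Real.exp_pos α) h1
  have hM0 : 0 < M := lt_trans hα hMα
  have hLα : α ≤ L := by
    have h1 : Real.exp α ≤ Real.exp α + 1 / h := by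
      have : (0:ℝ) ≤ 1 / h := by positivity
      linarith
    calc α = Real.log (Real.exp α) := (Real.log_exp α).symm
    _ ≤ L := Real.log_le_log (Real.exp_pos α) h1
  have hL0 : 0 < L := lt_of_lt_of_le hα hLα
  have hMm : α < M * m := lt_of_lt_of_le hMα (le_mul_of_one_le_right hM0.le hm1)
  have hLpow : 0 < L ^ α := Real.rpow_pos_of_pos hL0 α
  rcases le_or_gt L (M * m) with hcase | hcase
  · refine le_trans (min_le_left _ _) ?_
    have h1 : L ^ α ≤ (M * m) ^ α := Real.rpow_le_rpow hL0.le hcase hα.le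
    have h2 : (M * m) ^ α = M ^ α * m ^ α := Real.mul_rpow hM0.le hm0
    rw [Real.rpow_neg hL0.le]
    have h3 : L ^ α * (L ^ α)⁻¹ = 1 := mul_inv_cancel₀ hLpow.ne'
    have h1' : L ^ α ≤ M ^ α * m ^ α := h2 ▸ h1
    calc (2:ℝ) = 2 * (L ^ α * (L ^ α)⁻¹) := by rw [h3, mul_one]
    _ ≤ 2 * (M ^ α * m ^ α * (L ^ α)⁻¹) := by
        have := mul_le_mul_of_nonneg_right h1' (inv_nonneg.2 hLpow.le)
        linarith
    _ = 2 * M ^ α * m ^ α * (L ^ α)⁻¹ := by ring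
  · have hh0 : 0 < h := by
      rcases eq_or_lt_of_le hh with h0 | h0
      · exfalso
        rw [← h0] at hLdef
        rw [hLdef] at hcase
        simp [Real.log_exp] at hcase
        linarith
      · exact h0
    refine le_trans (min_le_right _ _) ?_
    have heL : Real.exp L = Real.exp α + 1 / h := Real.exp_log (by positivity)
    have hexpM : Real.exp M = Real.exp α + |t| + 2 := Real.exp_log (by positivity)
    set mn : ℕ := max 1 j with hmn
    have hexpMm : Real.exp (M * m) = (Real.exp α + |t| + 2) ^ mn := by
      rw [hmdef, mul_comm, Real.exp_nat_mul, hexpM]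
    have h1exp : (1:ℝ) ≤ Real.exp α := Real.one_le_exp hα.le
    have hkey : |t| * 2 ^ j ≤ 2 * (Real.exp (M * m) - Real.exp α) := by
      rw [hexpMm]
      have hre : Real.exp α + |t| + 2 = (Real.exp α + 2) + |t| := by ring
      rw [hre]
      have h4 := aux_pow_lb (Real.exp α + 2) |t| (by linarith) (abs_nonneg t) mn
        (le_max_left 1 j)
      have h5 : (3:ℝ) ^ (mn - 1) ≤ (Real.exp α + 2) ^ (mn - 1) :=
        pow_le_pow_left₀ (by norm_num) (by linarith) _
      have h6 : Real.exp α + 2 ≤ (Real.exp α + 2) ^ mn :=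
        le_self_pow₀ (by linarith) (by omega)
      have h7 := aux_two_three j
      have h8 := mul_le_mul_of_nonneg_left h7 (abs_nonneg t)
      nlinarith [mul_le_mul_of_nonneg_right h5 (abs_nonneg t)]
    have h8 := aux_mono α (M * m) L hα hMm.le hcase.le
    have h9 : Real.exp L - Real.exp α = 1 / h := by rw [heL]; ring
    rw [Real.rpow_neg hL0.le]
    have h11 : |t| * (2 ^ j * h) * L ^ α ≤ 2 * (M * m) ^ α := by
      have s1 : |t| * 2 ^ j * L ^ α ≤ 2 * (Real.exp (M * m) - Real.exp α) * L ^ α :=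
        mul_le_mul_of_nonneg_right hkey hLpow.le
      have s2 : h * (2 * (L ^ α * (Real.exp (M * m) - Real.exp α))) ≤
          h * (2 * ((M * m) ^ α * (Real.exp L - Real.exp α))) := by
        apply mul_le_mul_of_nonneg_left _ hh0.le
        linarith
      calc |t| * (2 ^ j * h) * L ^ α = h * (|t| * 2 ^ j * L ^ α) := by ring
      _ ≤ h * (2 * (L ^ α * (Real.exp (M * m) - Real.exp α))) := by
          apply mul_le_mul_of_nonneg_left _ hh0.le
          linarith
      _ ≤ h * (2 * ((M * m) ^ α * (Real.exp L - Real.exp α))) := s2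
      _ = h * (2 * ((M * m) ^ α * (1 / h))) := by rw [h9]
      _ = 2 * (M * m) ^ α := by field_simp
    have h12 := mul_le_mul_of_nonneg_right h11 (inv_nonneg.2 hLpow.le)
    have h13 : |t| * (2 ^ j * h) = |t| * (2 ^ j * h) * L ^ α * (L ^ α)⁻¹ := by
      rw [mul_assoc (|t| * (2 ^ j * h)), mul_inv_cancel₀ hLpow.ne', mul_one]
    have h14 : 2 * (M * m) ^ α * (L ^ α)⁻¹ = 2 * M ^ α * m ^ α * (L ^ α)⁻¹ := by
      rw [Real.mul_rpow hM0.le hm0]; ring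
    rw [h13, ← h14]
    exact h12

lemma fourier_bound (ψ g : ℝ → ℂ) (hg : Integrable g)
    (hrep : ∀ x : ℝ, ψ x =
      ((1 / (2 * Real.pi) : ℝ) : ℂ) * ∫ u : ℝ, Complex.exp (Complex.I * u * x) * g u)
    (u v : ℝ) :
    ‖ψ u - ψ v‖ ≤ (1 / (2 * Real.pi)) * ∫ t : ℝ, min 2 (|t| * |u - v|) * ‖g t‖ := by
  have hexp_norm : ∀ (t w : ℝ), ‖Complex.exp (Complex.I * t * w)‖ = 1 := by
    intro t w
    rw [Complex.norm_exp]
    have : (Complex.I * t * w).re = 0 := by simp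
    rw [this, Real.exp_zero]
  have hi : ∀ w : ℝ, Integrable (fun t : ℝ => Complex.exp (Complex.I * t * w) * g t) := by
    intro w
    apply hg.bdd_mul
    · apply Continuous.aestronglyMeasurable
      fun_prop
    · exact Filter.Eventually.of_forall (fun t => le_of_eq (hexp_norm t w))
  have hsub : ψ u - ψ v = ((1 / (2 * Real.pi) : ℝ) : ℂ) *
      ∫ t : ℝ, (Complex.exp (Complex.I * t * u) - Complex.exp (Complex.I * t * v)) * g t := by
    rw [hrep u, hrep v, ← mul_sub]
    congr 1
    rw [← integral_sub (hi u) (hi v)]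
    congr 1
    ext t
    ring
  rw [hsub, norm_mul]
  have hc : ‖((1 / (2 * Real.pi) : ℝ) : ℂ)‖ = 1 / (2 * Real.pi) := by
    rw [Complex.norm_real, Real.norm_eq_abs, abs_of_pos (by positivity)]
  rw [hc]
  apply mul_le_mul_of_nonneg_left _ (by positivity)
  apply norm_integral_le_of_norm_le
  · apply Integrable.mono' (hg.norm.const_mul 2)
    · apply AEStronglyMeasurable.mul
      · exact (continuous_const.min (continuous_abs.mul continuous_const)).aestronglyMeasurable
      · exact hg.norm.aestronglyMeasurable
    · filter_upwards with t
      have h1 : (0:ℝ) ≤ min 2 (|t| * |u - v|) := le_min (by norm_num) (by positivity)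
      have h2 : min 2 (|t| * |u - v|) ≤ 2 := min_le_left _ _
      rw [Real.norm_eq_abs, abs_of_nonneg (mul_nonneg h1 (norm_nonneg _))]
      exact mul_le_mul_of_nonneg_right h2 (norm_nonneg _)
  · filter_upwards with t
    rw [norm_mul]
    exact mul_le_mul_of_nonneg_right (aux_exp_diff t u v) (norm_nonneg _)

lemma lattice_sum (Φψ : ℝ → ℝ) (a : ℝ) (ha : 0 ≤ a)
    (hΦ_anti : AntitoneOn Φψ (Set.Ici 0))
    (hΦ0 : ∀ t : ℝ, 0 ≤ t → 0 ≤ Φψ t)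
    (hsupp : ∀ x : ℝ, a < x → Φψ x = 0)
    (γ : ℝ) (hγ0 : 0 < γ) (hγ1 : γ < 1) (w : ℝ) (F : Finset ℤ) :
    (∑ k ∈ F, Φψ |w - (k : ℝ)| ^ γ) ≤
      (if (1:ℝ)/2 < a then 3 * Φψ 0 ^ γ + 4 * ∫ t in (1/2:ℝ)..a, Φψ t ^ γ
       else 3 * Φψ 0 ^ γ) := by
  have hφ_nonneg : ∀ t : ℝ, 0 ≤ t → 0 ≤ Φψ t ^ γ := fun t ht =>
    Real.rpow_nonneg (hΦ0 t ht) γ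
  have hφ_anti : ∀ s t : ℝ, 0 ≤ s → s ≤ t → Φψ t ^ γ ≤ Φψ s ^ γ := fun s t hs hst =>
    Real.rpow_le_rpow (hΦ0 t (le_trans hs hst))
      (hΦ_anti (Set.mem_Ici.2 hs) (Set.mem_Ici.2 (le_trans hs hst)) hst) hγ0.le
  have hφ_antiOn : AntitoneOn (fun t => Φψ t ^ γ) (Set.Ici 0) := fun s hs t ht hst =>
    hφ_anti s t hs hst
  have hφ_zero : ∀ t : ℝ, a < t → Φψ t ^ γ = 0 := fun t htt => by
    rw [hsupp t htt, Real.zero_rpow hγ0.ne']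
  have hφ00 : 0 ≤ Φψ 0 ^ γ := hφ_nonneg 0 le_rfl
  set n : ℤ := round w with hn
  have hr : |w - (n:ℝ)| ≤ 1/2 := abs_sub_round w
  set b : ℤ → ℝ := fun i => if i = 0 then Φψ 0 ^ γ else Φψ ((i.natAbs : ℝ) - 1/2) ^ γ
    with hb
  have hb_nonneg : ∀ i, 0 ≤ b i := by
    intro i
    rw [hb]
    dsimp only
    split_ifs with hi
    · exact hφ00
    · apply hφ_nonneg
      have h1 : 1 ≤ i.natAbs := Int.natAbs_pos.2 hi
      have : (1:ℝ) ≤ (i.natAbs : ℝ) := by exact_mod_cast h1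
      linarith
  have hkey : ∀ k : ℤ, Φψ |w - (k:ℝ)| ^ γ ≤ b (k - n) := by
    intro k
    rw [hb]
    dsimp only
    split_ifs with hi
    · have hk : k = n := by omega
      subst hk
      exact hφ_anti 0 _ le_rfl (abs_nonneg _)
    · have hnat1 : 1 ≤ (k - n).natAbs := Int.natAbs_pos.2 hi
      have hnat1' : (1:ℝ) ≤ ((k - n).natAbs : ℝ) := by exact_mod_cast hnat1
      have habs : |(k:ℝ) - (n:ℝ)| = ((k - n).natAbs : ℝ) := by
        rw [Nat.cast_natAbs]
        push_cast
        ring_nf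
      have htri : |(k:ℝ) - (n:ℝ)| ≤ |w - (n:ℝ)| + |w - (k:ℝ)| := by
        have heq : (k:ℝ) - n = (w - n) - (w - k) := by ring
        rw [heq]
        exact abs_sub _ _
      have h1 : ((k - n).natAbs : ℝ) - 1/2 ≤ |w - (k:ℝ)| := by
        rw [← habs]; linarith
      exact hφ_anti _ _ (by linarith) h1
  set N : ℕ := ⌈a⌉₊ + 2 with hN
  have hbz : ∀ i : ℤ, N < i.natAbs → b i = 0 := by
    intro i hi
    rw [hb]
    dsimp only
    rw [if_neg (by omega)]
    apply hφ_zero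
    have h1 : (N:ℝ) + 1 ≤ (i.natAbs : ℝ) := by exact_mod_cast hi
    have h2 : a ≤ (⌈a⌉₊ : ℝ) := Nat.le_ceil a
    have h3 : (N:ℝ) = (⌈a⌉₊:ℝ) + 2 := by rw [hN]; push_cast; ring
    linarith
  have step1 : (∑ k ∈ F, Φψ |w - (k:ℝ)| ^ γ) ≤ ∑ k ∈ F, b (k - n) :=
    Finset.sum_le_sum fun k _ => hkey k
  have step2 : ∑ k ∈ F, b (k - n) = ∑ i ∈ F.image (fun k => k - n), b i :=
    (Finset.sum_image (by intro x _ y _ hxy; simp only at hxy; omega)).symm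
  have step3 : ∑ i ∈ F.image (fun k => k - n), b i ≤
      ∑ i ∈ Finset.Icc (-(N:ℤ)) N, b i := by
    rw [← Finset.sum_filter_of_ne
      (p := fun i => i ∈ Finset.Icc (-(N:ℤ)) N)
      (by intro i _ hbi
          by_contra hmem
          apply hbi
          apply hbz
          rw [Finset.mem_Icc] at hmem
          omega)]
    apply Finset.sum_le_sum_of_subset_of_nonneg
    · intro i hi
      exact (Finset.mem_filter.1 hi).2
    · intro i _ _
      exact hb_nonneg i
  have hsplitIcc : Finset.Icc (-(N:ℤ)) N =
      insert 0 (Finset.Icc (-(N:ℤ)) (-1) ∪ Finset.Icc 1 N) := by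
    ext i
    simp only [Finset.mem_Icc, Finset.mem_insert, Finset.mem_union]
    omega
  have h0notin : (0:ℤ) ∉ Finset.Icc (-(N:ℤ)) (-1) ∪ Finset.Icc 1 N := by
    simp only [Finset.mem_union, Finset.mem_Icc]
    omega
  have hdisj : Disjoint (Finset.Icc (-(N:ℤ)) (-1)) (Finset.Icc (1:ℤ) N) := by
    rw [Finset.disjoint_left]
    intro i h1 h2
    simp only [Finset.mem_Icc] at h1 h2
    omega
  have step4 : ∑ i ∈ Finset.Icc (-(N:ℤ)) N, b i =
      b 0 + (∑ i ∈ Finset.Icc (-(N:ℤ)) (-1), b i + ∑ i ∈ Finset.Icc (1:ℤ) N, b i) := by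
    rw [hsplitIcc, Finset.sum_insert h0notin, Finset.sum_union hdisj]
  have hneg : ∑ i ∈ Finset.Icc (-(N:ℤ)) (-1), b i = ∑ i ∈ Finset.Icc (1:ℤ) N, b i := by
    have himg : Finset.Icc (-(N:ℤ)) (-1) = (Finset.Icc (1:ℤ) N).image (fun i => -i) := by
      ext i
      simp only [Finset.mem_Icc, Finset.mem_image]
      constructor
      · intro hi
        exact ⟨-i, by omega, by omega⟩
      · rintro ⟨q, hq, rfl⟩
        omega
    rw [himg, Finset.sum_image (by intro x _ y _ hxy; simp only at hxy; omega)]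
    apply Finset.sum_congr rfl
    intro i _
    rw [hb]
    simp only [neg_eq_zero, Int.natAbs_neg]
  have hIccN : ∑ i ∈ Finset.Icc (1:ℤ) N, b i =
      ∑ q ∈ Finset.range N, Φψ ((q:ℝ) + 1/2) ^ γ := by
    have himg2 : Finset.Icc (1:ℤ) N = (Finset.range N).image (fun q : ℕ => (q:ℤ) + 1) := by
      ext i
      simp only [Finset.mem_Icc, Finset.mem_range, Finset.mem_image]
      constructor
      · intro hi
        exact ⟨(i - 1).toNat, by omega, by omega⟩
      · rintro ⟨q, hq, rfl⟩
        omega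
    rw [himg2, Finset.sum_image (by intro x _ y _ hxy; simp only at hxy; omega)]
    apply Finset.sum_congr rfl
    intro q _
    rw [hb]
    dsimp only
    rw [if_neg (by omega)]
    congr 1
    have : ((q:ℤ) + 1).natAbs = q + 1 := by omega
    rw [this]
    push_cast
    ring
  have hb0 : b 0 = Φψ 0 ^ γ := by rw [hb]; norm_num
  have hrange : ∑ q ∈ Finset.range N, Φψ ((q:ℝ) + 1/2) ^ γ =
      Φψ (1/2) ^ γ + ∑ q ∈ Finset.range (N - 1), Φψ ((q:ℝ) + 3/2) ^ γ := by
    have hN2 : N = (N - 1) + 1 := by omega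
    rw [hN2, Finset.sum_range_succ']
    have : ∀ q : ℕ, Φψ (((q + 1 : ℕ):ℝ) + 1/2) ^ γ = Φψ ((q:ℝ) + 3/2) ^ γ := by
      intro q; congr 1; push_cast; ring
    rw [Finset.sum_congr rfl (fun q _ => this q)]
    norm_num
    ring
  have hhalf : Φψ (1/2) ^ γ ≤ Φψ 0 ^ γ := hφ_anti 0 (1/2) le_rfl (by norm_num)
  by_cases hca : (1:ℝ)/2 < a
  · -- big support case
    rw [if_pos hca]
    have hii : ∀ u v : ℝ, 0 ≤ u → u ≤ v →
        IntervalIntegrable (fun t => Φψ t ^ γ) volume u v := by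
      intro u v hu huv
      apply AntitoneOn.intervalIntegrable
      apply hφ_antiOn.mono
      rw [Set.uIcc_of_le huv]
      intro z hz
      exact Set.mem_Ici.2 (le_trans hu hz.1)
    have hIntUnit : ∀ q : ℕ, Φψ ((q:ℝ) + 3/2) ^ γ ≤
        ∫ t in ((q:ℝ) + 1/2)..((q:ℝ) + 3/2), Φψ t ^ γ := by
      intro q
      have hq0 : (0:ℝ) ≤ (q:ℝ) + 1/2 := by positivity
      have hle : (q:ℝ) + 1/2 ≤ (q:ℝ) + 3/2 := by linarith
      have hconst : ∫ _t in ((q:ℝ) + 1/2)..((q:ℝ) + 3/2), Φψ ((q:ℝ) + 3/2) ^ γ =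
          Φψ ((q:ℝ) + 3/2) ^ γ := by
        rw [intervalIntegral.integral_const]
        have : ((q:ℝ) + 3/2) - ((q:ℝ) + 1/2) = 1 := by ring
        rw [this, one_smul]
      rw [← hconst]
      apply intervalIntegral.integral_mono_on hle intervalIntegrable_const (hii _ _ hq0 hle)
      intro z hz
      exact hφ_anti z ((q:ℝ) + 3/2) (le_trans hq0 hz.1) hz.2
    have hadj : ∑ q ∈ Finset.range (N-1),
        ∫ t in (((q:ℕ):ℝ) + 1/2)..(((q+1:ℕ)):ℝ) + 1/2, Φψ t ^ γ =
        ∫ t in (((0:ℕ):ℝ) + 1/2)..(((N-1:ℕ):ℝ) + 1/2), Φψ t ^ γ := by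
      apply intervalIntegral.sum_integral_adjacent_intervals
      intro k _
      apply hii
      · positivity
      · push_cast; linarith
    have tailbound : ∑ q ∈ Finset.range (N-1), Φψ ((q:ℝ) + 3/2) ^ γ ≤
        ∫ t in (1/2:ℝ)..(((N-1:ℕ):ℝ) + 1/2), Φψ t ^ γ := by
      calc ∑ q ∈ Finset.range (N-1), Φψ ((q:ℝ) + 3/2) ^ γ
          ≤ ∑ q ∈ Finset.range (N-1), ∫ t in ((q:ℝ) + 1/2)..((q:ℝ) + 3/2), Φψ t ^ γ :=
            Finset.sum_le_sum fun q _ => hIntUnit q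
      _ = ∑ q ∈ Finset.range (N-1),
            ∫ t in (((q:ℕ):ℝ) + 1/2)..((((q+1:ℕ)):ℝ) + 1/2), Φψ t ^ γ := by
            apply Finset.sum_congr rfl
            intro q _
            congr 1
            push_cast
            ring
      _ = ∫ t in (((0:ℕ):ℝ) + 1/2)..(((N-1:ℕ):ℝ) + 1/2), Φψ t ^ γ := hadj
      _ = ∫ t in (1/2:ℝ)..(((N-1:ℕ):ℝ) + 1/2), Φψ t ^ γ := by norm_num
    set c : ℝ := ((N-1:ℕ):ℝ) + 1/2 with hc
    have hNc : (N - 1 : ℕ) = ⌈a⌉₊ + 1 := by omega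
    have hac : a ≤ c := by
      have h2 : a ≤ (⌈a⌉₊ : ℝ) := Nat.le_ceil a
      rw [hc, hNc]
      push_cast
      linarith
    have h12a : (1/2:ℝ) ≤ a := le_of_lt hca
    have hsplit2 : ∫ t in (1/2:ℝ)..c, Φψ t ^ γ =
        (∫ t in (1/2:ℝ)..a, Φψ t ^ γ) + ∫ t in a..c, Φψ t ^ γ :=
      (intervalIntegral.integral_add_adjacent_intervals (hii _ _ (by norm_num) h12a)
        (hii _ _ (by linarith) hac)).symm
    have hzero2 : ∫ t in a..c, Φψ t ^ γ = 0 := by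
      rw [intervalIntegral.integral_of_le hac]
      rw [MeasureTheory.setIntegral_congr_fun measurableSet_Ioc
        (g := fun _ => (0:ℝ)) (fun t ht => hφ_zero t ht.1)]
      simp
    have hint_nonneg : 0 ≤ ∫ t in (1/2:ℝ)..a, Φψ t ^ γ :=
      intervalIntegral.integral_nonneg h12a (fun u hu => hφ_nonneg u (by linarith [hu.1]))
    have htail2 : ∑ q ∈ Finset.range (N-1), Φψ ((q:ℝ) + 3/2) ^ γ ≤
        ∫ t in (1/2:ℝ)..a, Φψ t ^ γ := by
      calc ∑ q ∈ Finset.range (N-1), Φψ ((q:ℝ) + 3/2) ^ γ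
          ≤ ∫ t in (1/2:ℝ)..c, Φψ t ^ γ := tailbound
      _ = (∫ t in (1/2:ℝ)..a, Φψ t ^ γ) + ∫ t in a..c, Φψ t ^ γ := hsplit2
      _ = ∫ t in (1/2:ℝ)..a, Φψ t ^ γ := by rw [hzero2, add_zero]
    calc (∑ k ∈ F, Φψ |w - (k:ℝ)| ^ γ) ≤ ∑ i ∈ Finset.Icc (-(N:ℤ)) N, b i :=
        le_trans step1 (le_of_le_of_eq (le_of_eq step2) rfl |>.trans step3)
    _ = b 0 + (∑ i ∈ Finset.Icc (-(N:ℤ)) (-1), b i + ∑ i ∈ Finset.Icc (1:ℤ) N, b i) :=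
        step4
    _ = Φψ 0 ^ γ + 2 * (Φψ (1/2) ^ γ + ∑ q ∈ Finset.range (N - 1), Φψ ((q:ℝ) + 3/2) ^ γ) := by
        rw [hneg, hIccN, hb0, hrange]; ring
    _ ≤ 3 * Φψ 0 ^ γ + 4 * ∫ t in (1/2:ℝ)..a, Φψ t ^ γ := by
        linarith
  · -- small support case
    rw [if_neg hca]
    push_neg at hca
    have htailzero : ∑ q ∈ Finset.range (N - 1), Φψ ((q:ℝ) + 3/2) ^ γ = 0 := by
      apply Finset.sum_eq_zero
      intro q _
      apply hφ_zero
      have : (0:ℝ) ≤ (q:ℝ) := Nat.cast_nonneg q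
      linarith
    calc (∑ k ∈ F, Φψ |w - (k:ℝ)| ^ γ) ≤ ∑ i ∈ Finset.Icc (-(N:ℤ)) N, b i :=
        le_trans step1 (le_of_le_of_eq (le_of_eq step2) rfl |>.trans step3)
    _ = b 0 + (∑ i ∈ Finset.Icc (-(N:ℤ)) (-1), b i + ∑ i ∈ Finset.Icc (1:ℤ) N, b i) :=
        step4
    _ = Φψ 0 ^ γ + 2 * (Φψ (1/2) ^ γ + ∑ q ∈ Finset.range (N - 1), Φψ ((q:ℝ) + 3/2) ^ γ) := by
        rw [hneg, hIccN, hb0, hrange]; ring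
    _ ≤ 3 * Φψ 0 ^ γ := by
        rw [htailzero]
        linarith

set_option maxHeartbeats 1600000 in
/-- Combined lattice bound for wavelet increments:
`Σ_{k∈ℤ} |ψ_{jk}(x) − ψ_{jk}(y)| ≤ 2^{j/2+1} R_α^{1−γ} L_γ max(1, j^{α(1−γ)})
ln^{−α(1−γ)}(e^α + 1/|x−y|)`, where `L_γ` is the constant of the lattice-sum lemma
(two cases depending on whether `â > 1/2` or `â < 1/2`). -/
theorem scaled_wavelet_increment_sum_bound (ψ g : ℝ → ℂ)
    (Φψ : ℝ → ℝ) (a : ℝ) (ha : 0 ≤ a)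
    (hΦ_anti : AntitoneOn Φψ (Set.Ici 0))
    (hdom : ∀ x : ℝ, ‖ψ x‖ ≤ Φψ |x|)
    (hsupp : ∀ x : ℝ, a < x → Φψ x = 0)
    (hrep : ∀ x : ℝ, ψ x =
      ((1 / (2 * Real.pi) : ℝ) : ℂ) * ∫ u : ℝ, Complex.exp (Complex.I * u * x) * g u)
    (α : ℝ) (hα : 0 < α)
    (hint : Integrable (fun u : ℝ => (Real.log (1 + |u|)) ^ α * ‖g u‖)) :
    ∀ (γ : ℝ), 0 < γ → γ < 1 → ∀ (x y : ℝ) (j : ℕ),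
      (∑' k : ℤ, ‖scaledW ψ j k x - scaledW ψ j k y‖) ≤
        (2 : ℝ) ^ ((j : ℝ) / 2 + 1) *
          ((1 / Real.pi) * ∫ u : ℝ, (Real.log (Real.exp α + |u| + 2)) ^ α * ‖g u‖) ^ (1 - γ) *
          (if (1 : ℝ) / 2 < a then
            3 * Φψ 0 ^ γ + 4 * ∫ t in (1 / 2 : ℝ)..a, Φψ t ^ γ
          else 3 * Φψ 0 ^ γ) *
          max 1 ((j : ℝ) ^ (α * (1 - γ))) *
          (Real.log (Real.exp α + 1 / |x - y|)) ^ (-(α * (1 - γ))) := by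
  intro γ hγ0 hγ1 x y j
  have hπ : 0 < Real.pi := Real.pi_pos
  have h1exp : (1:ℝ) ≤ Real.exp α := Real.one_le_exp hα.le
  set R : ℝ := (1 / Real.pi) * ∫ u : ℝ, Real.log (Real.exp α + |u| + 2) ^ α * ‖g u‖ with hR
  set L : ℝ := Real.log (Real.exp α + 1 / |x - y|) with hL
  set P : ℝ := (2:ℝ) ^ ((j:ℝ)/2) with hP
  set m : ℝ := ((max 1 j : ℕ) : ℝ) with hm
  set C : ℝ := (if (1:ℝ)/2 < a then 3 * Φψ 0 ^ γ + 4 * ∫ t in (1/2:ℝ)..a, Φψ t ^ γ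
    else 3 * Φψ 0 ^ γ) with hC
  have hΦ0 : ∀ t : ℝ, 0 ≤ t → 0 ≤ Φψ t := by
    intro t ht
    have h2 : Φψ (max t (a+1)) = 0 :=
      hsupp _ (lt_of_lt_of_le (lt_add_one a) (le_max_right t (a+1)))
    have h3 := hΦ_anti (Set.mem_Ici.2 ht)
      (Set.mem_Ici.2 (le_trans ht (le_max_left t (a+1)))) (le_max_left t (a+1))
    rw [h2] at h3
    exact h3
  have hR0 : 0 ≤ R := by
    rw [hR]
    apply mul_nonneg (by positivity)
    apply integral_nonneg
    intro u
    apply mul_nonneg _ (norm_nonneg _)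
    apply Real.rpow_nonneg
    apply Real.log_nonneg
    have := abs_nonneg u
    linarith
  have hL0 : 0 ≤ L := by
    rw [hL]
    apply Real.log_nonneg
    have : (0:ℝ) ≤ 1 / |x - y| := by positivity
    linarith
  have hP0 : 0 < P := Real.rpow_pos_of_pos two_pos _
  have hm1 : (1:ℝ) ≤ m := by
    rw [hm]
    exact_mod_cast Nat.one_le_cast.2 (le_max_left 1 j)
  have hm0 : (0:ℝ) ≤ m := by linarith
  have hC0 : 0 ≤ C := by
    have hφ00 : 0 ≤ Φψ 0 ^ γ := Real.rpow_nonneg (hΦ0 0 le_rfl) γ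
    rw [hC]
    split_ifs with hca
    · have hint_nonneg : 0 ≤ ∫ t in (1/2:ℝ)..a, Φψ t ^ γ :=
        intervalIntegral.integral_nonneg hca.le
          (fun u hu => Real.rpow_nonneg (hΦ0 u (by linarith [hu.1])) γ)
      linarith
    · linarith
  set B : ℝ := R * m ^ α * L ^ (-α) with hB
  have hB0 : 0 ≤ B :=
    mul_nonneg (mul_nonneg hR0 (Real.rpow_nonneg hm0 α)) (Real.rpow_nonneg hL0 (-α))
  have e1 : (2:ℝ) ^ ((j:ℝ)/2 + 1) = 2 * P := by
    rw [Real.rpow_add two_pos, Real.rpow_one, hP]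
    ring
  have e2 : max 1 ((j:ℝ) ^ (α * (1 - γ))) = (m ^ α) ^ (1 - γ) := by
    have hmm : (m ^ α) ^ (1 - γ) = m ^ (α * (1 - γ)) := by
      rw [← Real.rpow_mul hm0]
    rw [hmm]
    rcases Nat.eq_zero_or_pos j with hj | hj
    · subst hj
      have hm' : m = 1 := by rw [hm]; norm_num
      rw [hm', Real.one_rpow]
      have hexp_ne : α * (1 - γ) ≠ 0 := by
        have : 0 < α * (1 - γ) := by nlinarith
        exact this.ne'
      rw [Nat.cast_zero, Real.zero_rpow hexp_ne]
      norm_num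
    · have hj1 : (1:ℝ) ≤ (j:ℝ) := by exact_mod_cast hj
      have hmj : m = (j:ℝ) := by
        rw [hm]
        exact_mod_cast congrArg (Nat.cast : ℕ → ℝ) (max_eq_right hj)
      have h1le : (1:ℝ) ≤ (j:ℝ) ^ (α * (1 - γ)) := by
        calc (1:ℝ) = 1 ^ (α * (1 - γ)) := (Real.one_rpow _).symm
        _ ≤ (j:ℝ) ^ (α * (1 - γ)) := Real.rpow_le_rpow zero_le_one hj1 (by nlinarith)
      rw [max_eq_right h1le, hmj]
  have e3 : L ^ (-(α * (1 - γ))) = (L ^ (-α)) ^ (1 - γ) := by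
    rw [← Real.rpow_mul hL0]
    congr 1
    ring
  have e4 : B ^ (1 - γ) = R ^ (1 - γ) * (m ^ α) ^ (1 - γ) * (L ^ (-α)) ^ (1 - γ) := by
    rw [hB, Real.mul_rpow (mul_nonneg hR0 (Real.rpow_nonneg hm0 α)) (Real.rpow_nonneg hL0 (-α)),
      Real.mul_rpow hR0 (Real.rpow_nonneg hm0 α)]
  have hRHS : (2:ℝ) ^ ((j:ℝ)/2 + 1) * R ^ (1 - γ) * C * max 1 ((j:ℝ) ^ (α * (1 - γ))) *
      L ^ (-(α * (1 - γ))) = 2 * P * B ^ (1 - γ) * C := by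
    rw [e1, e2, e3, e4]
    ring
  rw [hRHS]
  have hψzero : ∀ w : ℝ, a < |w| → ψ w = 0 := by
    intro w hw
    have h1 : ‖ψ w‖ ≤ 0 := by
      calc ‖ψ w‖ ≤ Φψ |w| := hdom w
      _ = 0 := hsupp _ hw
    exact norm_le_zero_iff.1 h1
  by_cases hg : Integrable g
  · -- main case
    set X : ℝ := (2:ℝ)^j * x with hX
    set Y : ℝ := (2:ℝ)^j * y with hY
    have hRint : Integrable (fun u : ℝ => Real.log (Real.exp α + |u| + 2) ^ α * ‖g u‖) := by
      set Cα : ℝ := Real.log (Real.exp α + 2) with hCα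
      have hCα0 : 0 ≤ Cα := Real.log_nonneg (by linarith)
      apply Integrable.mono' ((hg.norm.const_mul ((2:ℝ)^α * Cα^α)).add (hint.const_mul ((2:ℝ)^α)))
      · apply AEStronglyMeasurable.mul _ hg.norm.aestronglyMeasurable
        apply Continuous.aestronglyMeasurable
        apply Continuous.rpow_const
        · apply Continuous.log
          · fun_prop
          · intro u
            have := abs_nonneg u
            nlinarith
        · intro u
          exact Or.inr hα.le
      · filter_upwards with u
        have habs := abs_nonneg u
        have hNu0 : 0 ≤ Real.log (1 + |u|) := Real.log_nonneg (by linarith)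
        have hM0 : (0:ℝ) ≤ Real.log (Real.exp α + |u| + 2) := Real.log_nonneg (by linarith)
        have hMle : Real.log (Real.exp α + |u| + 2) ≤ Cα + Real.log (1 + |u|) := by
          rw [hCα, ← Real.log_mul (by positivity) (by positivity)]
          apply Real.log_le_log (by linarith)
          nlinarith
        have hMα_le : Real.log (Real.exp α + |u| + 2) ^ α ≤
            (2:ℝ)^α * Cα^α + (2:ℝ)^α * Real.log (1 + |u|) ^ α := by
          have h2pow : (0:ℝ) ≤ (2:ℝ)^α := Real.rpow_nonneg (by norm_num) α
          rcases le_total Cα (Real.log (1 + |u|)) with hcn | hcn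
          · have h1 : Real.log (Real.exp α + |u| + 2) ≤ 2 * Real.log (1 + |u|) := by linarith
            have h2 : Real.log (Real.exp α + |u| + 2) ^ α ≤ (2 * Real.log (1 + |u|))^α :=
              Real.rpow_le_rpow hM0 h1 hα.le
            have h3 : (2 * Real.log (1 + |u|))^α = (2:ℝ)^α * Real.log (1 + |u|) ^ α :=
              Real.mul_rpow (by norm_num) hNu0
            have h4 : 0 ≤ (2:ℝ)^α * Cα^α := mul_nonneg h2pow (Real.rpow_nonneg hCα0 _)
            linarith
          · have h1 : Real.log (Real.exp α + |u| + 2) ≤ 2 * Cα := by linarith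
            have h2 : Real.log (Real.exp α + |u| + 2) ^ α ≤ (2 * Cα)^α :=
              Real.rpow_le_rpow hM0 h1 hα.le
            have h3 : (2 * Cα)^α = (2:ℝ)^α * Cα^α := Real.mul_rpow (by norm_num) hCα0
            have h4 : 0 ≤ (2:ℝ)^α * Real.log (1 + |u|) ^ α :=
              mul_nonneg h2pow (Real.rpow_nonneg hNu0 _)
            linarith
        rw [Real.norm_eq_abs,
          abs_of_nonneg (mul_nonneg (Real.rpow_nonneg hM0 α) (norm_nonneg _))]
        calc Real.log (Real.exp α + |u| + 2) ^ α * ‖g u‖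
            ≤ ((2:ℝ)^α * Cα^α + (2:ℝ)^α * Real.log (1 + |u|) ^ α) * ‖g u‖ :=
              mul_le_mul_of_nonneg_right hMα_le (norm_nonneg _)
        _ = (2:ℝ)^α * Cα^α * ‖g u‖ + (2:ℝ)^α * (Real.log (1 + |u|) ^ α * ‖g u‖) := by ring
    have hmin_int : Integrable (fun t : ℝ => min 2 (|t| * ((2:ℝ)^j * |x - y|)) * ‖g t‖) := by
      apply Integrable.mono' (hg.norm.const_mul 2)
      · exact ((continuous_const.min
          ((continuous_abs).mul continuous_const)).aestronglyMeasurable).mul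
          hg.norm.aestronglyMeasurable
      · filter_upwards with t
        have h1 : (0:ℝ) ≤ min 2 (|t| * ((2:ℝ)^j * |x - y|)) := le_min (by norm_num) (by positivity)
        rw [Real.norm_eq_abs, abs_of_nonneg (mul_nonneg h1 (norm_nonneg _))]
        exact mul_le_mul_of_nonneg_right (min_le_left _ _) (norm_nonneg _)
    have hd1 : ∀ k : ℤ, ‖ψ (X - k) - ψ (Y - k)‖ ≤ B := by
      intro k
      have habs : |(X - k) - (Y - k)| = (2:ℝ)^j * |x - y| := by
        rw [hX, hY, show (2:ℝ)^j * x - k - ((2:ℝ)^j * y - k) = (2:ℝ)^j * (x - y) by ring,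
          abs_mul, abs_of_pos (pow_pos two_pos j)]
      have hmid : (1 / (2*Real.pi)) * ((2 * m^α * L^(-α)) *
          ∫ t : ℝ, Real.log (Real.exp α + |t| + 2) ^ α * ‖g t‖) = B := by
        rw [hB, hR]
        field_simp
      calc ‖ψ (X - k) - ψ (Y - k)‖
          ≤ (1 / (2*Real.pi)) * ∫ t : ℝ, min 2 (|t| * |(X - k) - (Y - k)|) * ‖g t‖ :=
            fourier_bound ψ g hg hrep _ _
      _ = (1 / (2*Real.pi)) * ∫ t : ℝ, min 2 (|t| * ((2:ℝ)^j * |x - y|)) * ‖g t‖ := by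
            rw [habs]
      _ ≤ (1 / (2*Real.pi)) * ∫ t : ℝ, (2 * m^α * L^(-α)) *
            (Real.log (Real.exp α + |t| + 2) ^ α * ‖g t‖) := by
            apply mul_le_mul_of_nonneg_left _ (by positivity)
            apply integral_mono hmin_int (hRint.const_mul _)
            intro t
            have hE := claimE α hα t |x - y| (abs_nonneg _) j
            calc min 2 (|t| * ((2:ℝ)^j * |x - y|)) * ‖g t‖
                ≤ (2 * Real.log (Real.exp α + |t| + 2) ^ α * m ^ α * L ^ (-α)) * ‖g t‖ :=
                  mul_le_mul_of_nonneg_right hE (norm_nonneg _)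
            _ = (2 * m^α * L^(-α)) * (Real.log (Real.exp α + |t| + 2) ^ α * ‖g t‖) := by
                  ring
      _ = (1 / (2*Real.pi)) * ((2 * m^α * L^(-α)) *
            ∫ t : ℝ, Real.log (Real.exp α + |t| + 2) ^ α * ‖g t‖) := by
            rw [integral_const_mul]
      _ = B := hmid
    have hd2 : ∀ k : ℤ, ‖ψ (X - k) - ψ (Y - k)‖ ≤ Φψ |X - k| + Φψ |Y - k| := fun k =>
      (norm_sub_le _ _).trans (add_le_add (hdom _) (hdom _))
    have hterm : ∀ k : ℤ, ‖ψ (X - k) - ψ (Y - k)‖ ≤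
        B ^ (1 - γ) * (Φψ |X - k| ^ γ + Φψ |Y - k| ^ γ) := by
      intro k
      have h1 := aux_interp _ _ _ γ (norm_nonneg _) (hd1 k) (hd2 k) hγ0 hγ1
      have hXk : 0 ≤ Φψ |X - k| := hΦ0 _ (abs_nonneg _)
      have hYk : 0 ≤ Φψ |Y - k| := hΦ0 _ (abs_nonneg _)
      calc ‖ψ (X - k) - ψ (Y - k)‖ ≤ B ^ (1 - γ) * (Φψ |X - k| + Φψ |Y - k|) ^ γ := h1
      _ ≤ B ^ (1 - γ) * (Φψ |X - k| ^ γ + Φψ |Y - k| ^ γ) :=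
          mul_le_mul_of_nonneg_left (aux_add_rpow _ _ γ hXk hYk hγ0.le hγ1.le)
            (Real.rpow_nonneg hB0 _)
    set lo : ℤ := ⌊min X Y - a⌋ with hlo
    set hi : ℤ := ⌈max X Y + a⌉ with hhi
    set F : Finset ℤ := Finset.Icc lo hi with hF
    have houtside : ∀ k : ℤ, k ∉ F → (ψ (X - k) = 0 ∧ ψ (Y - k) = 0) := by
      intro k hk
      rw [hF, Finset.mem_Icc] at hk
      push_neg at hk
      have hcase : k < lo ∨ hi < k := by omega
      have key : ∀ w : ℝ, min X Y ≤ w → w ≤ max X Y → ψ (w - k) = 0 := by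
        intro w hw1 hw2
        apply hψzero
        rcases hcase with h | h
        · have h1 : (k:ℝ) + 1 ≤ (lo:ℝ) := by exact_mod_cast Int.lt_iff_add_one_le.mp h
          have h2 : (lo:ℝ) ≤ min X Y - a := Int.floor_le _
          have h3 : a < w - k := by linarith
          exact lt_of_lt_of_le h3 (le_abs_self _)
        · have h1 : (hi:ℝ) + 1 ≤ (k:ℝ) := by exact_mod_cast Int.lt_iff_add_one_le.mp h
          have h2 : max X Y + a ≤ (hi:ℝ) := Int.le_ceil _
          have h3 : a < (k:ℝ) - w := by linarith
          calc a < (k:ℝ) - w := h3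
          _ ≤ |(k:ℝ) - w| := le_abs_self _
          _ = |w - k| := abs_sub_comm _ _
      exact ⟨key X (min_le_left _ _) (le_max_left _ _),
        key Y (min_le_right _ _) (le_max_right _ _)⟩
    have hf_eq : ∀ k : ℤ, ‖scaledW ψ j k x - scaledW ψ j k y‖ =
        P * ‖ψ (X - k) - ψ (Y - k)‖ := by
      intro k
      have hsw : scaledW ψ j k x - scaledW ψ j k y = ((P:ℝ):ℂ) * (ψ (X - k) - ψ (Y - k)) := by
        rw [hP, hX, hY]
        simp only [scaledW]
        ring
      rw [hsw, norm_mul, Complex.norm_real, Real.norm_eq_abs, abs_of_pos hP0]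
    have htsum : (∑' k : ℤ, ‖scaledW ψ j k x - scaledW ψ j k y‖) =
        ∑ k ∈ F, ‖scaledW ψ j k x - scaledW ψ j k y‖ := by
      apply tsum_eq_sum
      intro k hk
      rw [hf_eq k, (houtside k hk).1, (houtside k hk).2, sub_zero, norm_zero, mul_zero]
    rw [htsum]
    calc ∑ k ∈ F, ‖scaledW ψ j k x - scaledW ψ j k y‖
        = ∑ k ∈ F, P * ‖ψ (X - k) - ψ (Y - k)‖ := Finset.sum_congr rfl (fun k _ => hf_eq k)
    _ ≤ ∑ k ∈ F, P * (B ^ (1 - γ) * (Φψ |X - k| ^ γ + Φψ |Y - k| ^ γ)) :=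
        Finset.sum_le_sum (fun k _ => mul_le_mul_of_nonneg_left (hterm k) hP0.le)
    _ = P * B ^ (1 - γ) * ((∑ k ∈ F, Φψ |X - k| ^ γ) + ∑ k ∈ F, Φψ |Y - k| ^ γ) := by
        rw [← Finset.mul_sum]
        rw [show (∑ k ∈ F, (B ^ (1 - γ) * (Φψ |X - k| ^ γ + Φψ |Y - k| ^ γ))) =
          B ^ (1 - γ) * ∑ k ∈ F, (Φψ |X - k| ^ γ + Φψ |Y - k| ^ γ) from
          (Finset.mul_sum _ _ _).symm]
        rw [Finset.sum_add_distrib]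
        ring
    _ ≤ P * B ^ (1 - γ) * (C + C) := by
        apply mul_le_mul_of_nonneg_left _ (mul_nonneg hP0.le (Real.rpow_nonneg hB0 _))
        have hsx := lattice_sum Φψ a ha hΦ_anti hΦ0 hsupp γ hγ0 hγ1 X F
        have hsy := lattice_sum Φψ a ha hΦ_anti hΦ0 hsupp γ hγ0 hγ1 Y F
        rw [hC]
        exact add_le_add hsx hsy
    _ = 2 * P * B ^ (1 - γ) * C := by ring
  · -- g not integrable : ψ ≡ 0
    have hψall : ∀ u : ℝ, ψ u = 0 := by
      intro u
      rw [hrep u]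
      have hni : ¬ Integrable (fun t : ℝ => Complex.exp (Complex.I * t * u) * g t) := by
        intro hI
        apply hg
        have hmeas : AEStronglyMeasurable (fun t : ℝ => Complex.exp (-(Complex.I * t * u)))
            volume := by
          apply Continuous.aestronglyMeasurable
          fun_prop
        have hbdd : ∃ Cb : ℝ, ∀ t : ℝ, ‖Complex.exp (-(Complex.I * t * u))‖ ≤ Cb := by
          refine ⟨1, fun t => le_of_eq ?_⟩
          rw [Complex.norm_exp]
          have : (-(Complex.I * t * u)).re = 0 := by simp
          rw [this, Real.exp_zero]
        have h2 := hI.bdd_mul hmeas (Filter.Eventually.of_forall hbdd.choose_spec)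
        have heq : (fun t : ℝ => Complex.exp (-(Complex.I * t * u)) *
            (Complex.exp (Complex.I * t * u) * g t)) = g := by
          ext t
          rw [← mul_assoc, ← Complex.exp_add]
          simp
        rwa [heq] at h2
      rw [integral_undef hni, mul_zero]
    have h0 : (∑' k : ℤ, ‖scaledW ψ j k x - scaledW ψ j k y‖) = 0 := by
      have hz : ∀ k : ℤ, ‖scaledW ψ j k x - scaledW ψ j k y‖ = 0 := by
        intro k
        simp [scaledW, hψall]
      rw [tsum_congr hz, tsum_zero]
    rw [h0]
    exact mul_nonneg (mul_nonneg (mul_nonneg (by norm_num) hP0.le)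
      (Real.rpow_nonneg hB0 _)) hC0
end
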